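/- Let 0 < α ≤ 1, τ > 0, μ ≠ 0, β±, β as above, σ±(τ) = e^{iβ±τ/2} sinc(β±τ/2). Define q⁺ = (−ε²τ/(αβ))·(1−σ⁺(τ))/(β⁺ e^{iβ⁺τ}) and q⁻ = (−ε²τ/(αβ))·(1−σ⁻(τ))/(β⁻ e^{iβ⁻τ}). Then |q⁺| ≤ C ε² τ² and |q⁻| ≤ C ε² τ² for a constant C independent of μ, τ, ε. -/

import Mathlib

noncomputable def betaP (α μ : ℝ) : ℝ := (1 + Real.sqrt (1 + 4 * α * μ ^ 2)) / (2 * α)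
noncomputable def betaM (α μ : ℝ) : ℝ := (1 - Real.sqrt (1 + 4 * α * μ ^ 2)) / (2 * α)
noncomputable def betaD (α μ : ℝ) : ℝ := Real.sqrt (1 + 4 * α * μ ^ 2) / α
noncomputable def sinc (s : ℝ) : ℝ := if s = 0 then 1 else Real.sin s / s
noncomputable def sigP (α μ τ : ℝ) : ℂ :=
  Complex.exp (Complex.I * (betaP α μ) * τ / 2) * (sinc (betaP α μ * τ / 2) : ℂ)
noncomputable def sigM (α μ τ : ℝ) : ℂ :=
  Complex.exp (Complex.I * (betaM α μ) * τ / 2) * (sinc (betaM α μ * τ / 2) : ℂ)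

lemma abs_sub_sin_le (x : ℝ) (hx : 0 ≤ x) : |x - Real.sin x| ≤ 2 * x ^ 2 := by
  rcases eq_or_lt_of_le hx with h | h
  · simp [← h]
  rcases le_or_gt x 1 with h1 | h1
  · have hs := Real.sin_gt_sub_cube h
    have hs2 := Real.sin_le h.le
    rw [abs_of_nonneg (by linarith)]
    nlinarith
  · have := Real.neg_one_le_sin x
    have := Real.sin_le_one x
    rw [abs_of_nonneg (by nlinarith)]
    nlinarith

lemma sinc_sub_le (s : ℝ) : |1 - sinc s| ≤ 2 * |s| := by
  rcases eq_or_ne s 0 with rfl | hs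
  · simp [sinc]
  rw [sinc, if_neg hs]
  have h : 1 - Real.sin s / s = (s - Real.sin s) / s := by field_simp
  rw [h, abs_div]
  rw [div_le_iff₀ (abs_pos.mpr hs)]
  have key : |s - Real.sin s| ≤ 2 * s ^ 2 := by
    rcases le_or_gt 0 s with h0 | h0
    · exact abs_sub_sin_le s h0
    · have := abs_sub_sin_le (-s) (by linarith)
      rw [Real.sin_neg] at this
      calc |s - Real.sin s| = |(-s) - Real.sin (-s)| := by rw [Real.sin_neg]; rw [abs_sub_comm]; ring_nf
        _ ≤ 2 * (-s) ^ 2 := by rw [Real.sin_neg]; exact this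
        _ = 2 * s ^ 2 := by ring
  calc |s - Real.sin s| ≤ 2 * s ^ 2 := key
    _ = 2 * |s| * |s| := by rw [← sq_abs]; ring

lemma exp_I_sub_one_le (s : ℝ) : ‖(1 : ℂ) - Complex.exp (Complex.I * s)‖ ≤ |s| := by
  have h : Complex.I * (s : ℂ) = (s : ℂ) * Complex.I := mul_comm _ _
  rw [h, Complex.exp_mul_I]
  have hcos := Real.one_sub_sq_div_two_le_cos (x := s)
  have hsq : ‖(1 : ℂ) - (Complex.cos s + Complex.sin s * Complex.I)‖ ^ 2 = 2 - 2 * Real.cos s := by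
    rw [← Complex.ofReal_cos, ← Complex.ofReal_sin, Complex.sq_norm,
      Complex.normSq_apply]
    have := Real.sin_sq_add_cos_sq s
    simp [Complex.sub_re, Complex.sub_im, Complex.cos_ofReal_re, Complex.sin_ofReal_re,
      Complex.cos_ofReal_im, Complex.sin_ofReal_im, Complex.mul_re, Complex.mul_im]
    nlinarith
  nlinarith [norm_nonneg ((1 : ℂ) - (Complex.cos s + Complex.sin s * Complex.I)), abs_nonneg s,
    sq_abs s, hsq, hcos]

lemma key_bound (s : ℝ) : ‖(1 : ℂ) - Complex.exp (Complex.I * s) * (sinc s : ℂ)‖ ≤ 3 * |s| := by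
  have h1 : (1 : ℂ) - Complex.exp (Complex.I * s) * (sinc s : ℂ)
      = (1 - Complex.exp (Complex.I * s)) + Complex.exp (Complex.I * s) * ((1 : ℂ) - (sinc s : ℂ)) := by ring
  rw [h1]
  calc _ ≤ ‖(1 : ℂ) - Complex.exp (Complex.I * s)‖ + ‖Complex.exp (Complex.I * s) * ((1:ℂ) - (sinc s : ℂ))‖ := norm_add_le _ _
    _ ≤ |s| + 1 * (2 * |s|) := by
        gcongr
        · exact exp_I_sub_one_le s
        · rw [norm_mul]
          gcongr
          · rw [mul_comm, Complex.norm_exp_ofReal_mul_I]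
          · rw [← Complex.ofReal_one, ← Complex.ofReal_sub, Complex.norm_real]
            exact sinc_sub_le s
    _ = 3 * |s| := by ring

lemma main_aux (ε τ α d b : ℝ) (hε0 : 0 < ε) (hτ : 0 < τ) (hα : 0 < α) (hd0 : 0 < d)
    (hd : 1 ≤ α * d) (hb : b ≠ 0) :
    ‖-(ε : ℂ) ^ 2 * τ / ((α : ℂ) * d)
        * ((1 - Complex.exp (Complex.I * b * τ / 2) * (sinc (b * τ / 2) : ℂ))
            / ((b : ℂ) * Complex.exp (Complex.I * b * τ)))‖ ≤ 3 * ε ^ 2 * τ ^ 2 := by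
  have harg : Complex.I * (b : ℂ) * τ / 2 = Complex.I * ((b * τ / 2 : ℝ) : ℂ) := by
    push_cast; ring
  have hkey : ‖(1 : ℂ) - Complex.exp (Complex.I * b * τ / 2) * (sinc (b * τ / 2) : ℂ)‖
      ≤ 3 * |b * τ / 2| := by
    rw [harg]; exact key_bound (b * τ / 2)
  have hE : ‖Complex.exp (Complex.I * b * τ)‖ = 1 := by
    have h : Complex.I * (b : ℂ) * τ = ((b * τ : ℝ) : ℂ) * Complex.I := by push_cast; ring
    rw [h, Complex.norm_exp_ofReal_mul_I]
  simp only [norm_mul, norm_div, norm_neg, norm_pow, Complex.norm_real, Real.norm_eq_abs, hE, mul_one,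
    abs_of_pos hε0, abs_of_pos hτ, abs_of_pos hα, abs_of_pos hd0]
  have hbpos : 0 < |b| := abs_pos.mpr hb
  have hstep : ‖(1 : ℂ) - Complex.exp (Complex.I * b * τ / 2) * (sinc (b * τ / 2) : ℂ)‖ / |b|
      ≤ 3 * τ / 2 := by
    rw [div_le_iff₀ hbpos]
    calc _ ≤ 3 * |b * τ / 2| := hkey
      _ = 3 * τ / 2 * |b| := by rw [abs_div, abs_mul, abs_of_pos hτ]; simp; ring
  have hfrac : ε ^ 2 * τ / (α * d) ≤ ε ^ 2 * τ :=
    div_le_self (by positivity) hd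
  calc ε ^ 2 * τ / (α * d) * (‖(1 : ℂ) - Complex.exp (Complex.I * b * τ / 2) * (sinc (b * τ / 2) : ℂ)‖ / |b|)
      ≤ ε ^ 2 * τ * (3 * τ / 2) := by
        apply mul_le_mul hfrac hstep (by positivity) (by positivity)
    _ ≤ 3 * ε ^ 2 * τ ^ 2 := by nlinarith [sq_nonneg ε, sq_nonneg τ]

/-- Bounds |q±| ≤ C ε² τ², C independent of μ, τ, ε. -/
theorem stmt10 :
    ∃ C : ℝ, 0 < C ∧ ∀ α μ τ ε : ℝ, 0 < α → α ≤ 1 → 0 < τ → μ ≠ 0 →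
      0 < ε → ε ≤ 1 →
      ‖-(ε : ℂ) ^ 2 * τ / ((α : ℂ) * (betaD α μ))
          * ((1 - sigP α μ τ)
              / ((betaP α μ : ℂ) * Complex.exp (Complex.I * (betaP α μ) * τ)))‖
        ≤ C * ε ^ 2 * τ ^ 2 ∧
      ‖-(ε : ℂ) ^ 2 * τ / ((α : ℂ) * (betaD α μ))
          * ((1 - sigM α μ τ)
              / ((betaM α μ : ℂ) * Complex.exp (Complex.I * (betaM α μ) * τ)))‖
        ≤ C * ε ^ 2 * τ ^ 2 := by
  refine ⟨3, by norm_num, fun α μ τ ε hα hα1 hτ hμ hε hε1 => ?_⟩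
  set r := Real.sqrt (1 + 4 * α * μ ^ 2) with hrdef
  have hr0 : 0 ≤ r := Real.sqrt_nonneg _
  have hrsq : r ^ 2 = 1 + 4 * α * μ ^ 2 := Real.sq_sqrt (by positivity)
  have hμ2 : 0 < μ ^ 2 := by positivity
  have hr1 : 1 < r := by nlinarith
  have hd0 : 0 < betaD α μ := by
    unfold betaD; rw [← hrdef]; exact div_pos (by linarith) hα
  have hd : 1 ≤ α * betaD α μ := by
    unfold betaD; rw [← hrdef]
    have h : α * (r / α) = r := by field_simp
    rw [h]; linarith
  have hbP : betaP α μ ≠ 0 := by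
    unfold betaP; rw [← hrdef]
    exact ne_of_gt (div_pos (by linarith) (by linarith))
  have hbM : betaM α μ ≠ 0 := by
    unfold betaM; rw [← hrdef]
    exact ne_of_lt (div_neg_of_neg_of_pos (by linarith) (by linarith))
  constructor
  · simpa only [sigP] using
      main_aux ε τ α (betaD α μ) (betaP α μ) hε hτ hα hd0 hd hbP
  · simpa only [sigM] using
      main_aux ε τ α (betaD α μ) (betaM α μ) hε hτ hα hd0 hd hbM
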